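/- Assume c_j > 0 and l_j > 0 for all j. If x₀ ∈ P is a critical point of f on P (i.e. ∇f(x₀) = μ·l for some μ ∈ ℝ) and x₀ is a local maximum of f on P, then x₀ has at most one strictly negative coordinate: the set {j : x₀_j < 0} has at most one element. -/

import Mathlib

open scoped BigOperators

/-- Under assumption (A1) on `φ`, with `cⱼ > 0` and `lⱼ > 0` for all `j`,
any critical point `x₀` of `f` on `P` which is a local maximum of `f` on `P` has at
most one strictly negative coordinate. -/
theorem stmt_2 (n : ℕ) (φ : ℝ → ℝ)
    (hφC : ContDiff ℝ 2 φ)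
    (hodd : ∀ x : ℝ, φ (-x) = -φ x)
    (hφ' : ∀ x : ℝ, 0 < deriv φ x)
    (hφ'' : ∀ x : ℝ, x ≠ 0 → x * deriv (deriv φ) x < 0)
    (hlim : ∃ L : ℝ, Filter.Tendsto φ Filter.atTop (nhds L))
    (c l : Fin n → ℝ) (hc : ∀ j, 0 < c j) (hl : ∀ j, 0 < l j) (b : ℝ)
    (f : EuclideanSpace ℝ (Fin n) → ℝ)
    (hf : ∀ x : EuclideanSpace ℝ (Fin n), f x = ∑ i, c i * φ (x i))
    (P : Set (EuclideanSpace ℝ (Fin n)))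
    (hP : P = {x : EuclideanSpace ℝ (Fin n) | ∑ j, l j * x j = b})
    (x₀ : EuclideanSpace ℝ (Fin n)) (hx₀P : x₀ ∈ P)
    (μ : ℝ) (hcrit : ∀ j, c j * deriv φ (x₀ j) = μ * l j)
    (hmax : ∃ ε > 0, ∀ x ∈ P, ‖x - x₀‖ < ε → f x ≤ f x₀) :
    ∀ j k : Fin n, x₀ j < 0 → x₀ k < 0 → j = k := by
  intro j k hj hk
  by_contra hjk
  obtain ⟨ε, hε, hloc⟩ := hmax
  -- φ is differentiable and φ' is continuous
  have hφdiff : Differentiable ℝ φ := hφC.differentiable (by norm_num)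
  have hφ'cont : Continuous (deriv φ) := hφC.continuous_deriv (by norm_num)
  -- deriv φ is strictly monotone on Iic 0
  have hmono : StrictMonoOn (deriv φ) (Set.Iic (0:ℝ)) := by
    apply strictMonoOn_of_deriv_pos (convex_Iic 0) hφ'cont.continuousOn
    intro x hx
    rw [interior_Iic] at hx
    have hx' : x < 0 := hx
    have := hφ'' x (ne_of_lt hx')
    nlinarith
  -- the direction d
  set d : EuclideanSpace ℝ (Fin n) :=
    WithLp.toLp 2 (fun i => if i = j then (l j)⁻¹ else if i = k then -(l k)⁻¹ else 0) with hd
  have hdj : d j = (l j)⁻¹ := by simp [hd]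
  have hdk : d k = -(l k)⁻¹ := by
    have hkj : ¬(k = j) := fun h => hjk h.symm
    simp [hd, hkj]
  have hd0 : ∀ i, i ≠ j → i ≠ k → d i = 0 := by
    intro i h1 h2; simp [hd, h1, h2]
  -- choose t
  have hlj := hl j
  have hlk := hl k
  set t : ℝ := min (ε / (2 * (‖d‖ + 1))) ((-x₀ j) * l j) with ht
  have hdnorm : (0:ℝ) < ‖d‖ + 1 := by positivity
  have htpos : 0 < t := by
    apply lt_min
    · positivity
    · exact mul_pos (by linarith) hlj
  have ht1 : t * ‖d‖ < ε := by
    have h1 : t ≤ ε / (2 * (‖d‖ + 1)) := min_le_left _ _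
    have h2 : ‖d‖ < ‖d‖ + 1 := by linarith
    calc t * ‖d‖ ≤ (ε / (2 * (‖d‖ + 1))) * ‖d‖ := by
          apply mul_le_mul_of_nonneg_right h1 (norm_nonneg d)
      _ < ε := by
          rw [div_mul_eq_mul_div, div_lt_iff₀ (by positivity)]
          nlinarith [norm_nonneg d]
  have ht2 : x₀ j + t * (l j)⁻¹ ≤ 0 := by
    have h1 : t ≤ (-x₀ j) * l j := min_le_right _ _
    have : t * (l j)⁻¹ ≤ (-x₀ j) * l j * (l j)⁻¹ := by
      apply mul_le_mul_of_nonneg_right h1 (by positivity)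
    rw [mul_assoc, mul_inv_cancel₀ (ne_of_gt hlj), mul_one] at this
    linarith
  -- auxiliary function g
  set g : ℝ → ℝ := fun s => c j * φ (x₀ j + s * (l j)⁻¹) + c k * φ (x₀ k - s * (l k)⁻¹) with hg
  have hgd : ∀ s : ℝ, HasDerivAt g
      (c j * (deriv φ (x₀ j + s * (l j)⁻¹) * (l j)⁻¹)
        + c k * (deriv φ (x₀ k - s * (l k)⁻¹) * -(l k)⁻¹)) s := by
    intro s
    have i1 : HasDerivAt (fun s : ℝ => x₀ j + s * (l j)⁻¹) ((l j)⁻¹) s :=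
      (hasDerivAt_mul_const _).const_add _
    have i2 : HasDerivAt (fun s : ℝ => x₀ k - s * (l k)⁻¹) (-(l k)⁻¹) s :=
      (hasDerivAt_mul_const _).const_sub _
    have c1 := ((hφdiff _).hasDerivAt.comp s i1).const_mul (c j)
    have c2 := ((hφdiff _).hasDerivAt.comp s i2).const_mul (c k)
    exact c1.add c2
  -- g is strictly monotone on [0, t]
  have hgmono : StrictMonoOn g (Set.Icc 0 t) := by
    apply strictMonoOn_of_deriv_pos (convex_Icc 0 t)
      (fun s _ => ((hgd s).differentiableAt.continuousAt).continuousWithinAt)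
    intro s hs
    rw [interior_Icc] at hs
    rw [(hgd s).deriv]
    -- the two values of φ'
    have hsj : x₀ j < x₀ j + s * (l j)⁻¹ := by
      have : 0 < s * (l j)⁻¹ := mul_pos hs.1 (inv_pos.mpr hlj)
      linarith
    have hsj0 : x₀ j + s * (l j)⁻¹ ≤ 0 := by
      have : s * (l j)⁻¹ ≤ t * (l j)⁻¹ :=
        mul_le_mul_of_nonneg_right (le_of_lt hs.2) (by positivity)
      linarith [ht2]
    have hsk : x₀ k - s * (l k)⁻¹ < x₀ k := by
      have : 0 < s * (l k)⁻¹ := mul_pos hs.1 (inv_pos.mpr hlk)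
      linarith
    have m1 : deriv φ (x₀ j) < deriv φ (x₀ j + s * (l j)⁻¹) :=
      hmono (le_of_lt hj) hsj0 hsj
    have m2 : deriv φ (x₀ k - s * (l k)⁻¹) < deriv φ (x₀ k) :=
      hmono (by linarith : x₀ k - s * (l k)⁻¹ ≤ 0) (le_of_lt hk) hsk
    -- criticality
    have e1 : c j * deriv φ (x₀ j) * (l j)⁻¹ = μ := by
      rw [hcrit j, mul_assoc, mul_inv_cancel₀ (ne_of_gt hlj), mul_one]
    have e2 : c k * deriv φ (x₀ k) * (l k)⁻¹ = μ := by
      rw [hcrit k, mul_assoc, mul_inv_cancel₀ (ne_of_gt hlk), mul_one]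
    have p1 : μ < c j * (deriv φ (x₀ j + s * (l j)⁻¹) * (l j)⁻¹) := by
      rw [← e1]
      have := mul_lt_mul_of_pos_left m1 (hc j)
      have := mul_lt_mul_of_pos_right this (inv_pos.mpr hlj)
      linarith [this]
    have p2 : c k * (deriv φ (x₀ k - s * (l k)⁻¹) * (l k)⁻¹) < μ := by
      rw [← e2]
      have := mul_lt_mul_of_pos_left m2 (hc k)
      have := mul_lt_mul_of_pos_right this (inv_pos.mpr hlk)
      linarith [this]
    nlinarith [p1, p2]
  have hgt : g 0 < g t := hgmono (Set.left_mem_Icc.mpr (le_of_lt htpos))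
    (Set.right_mem_Icc.mpr (le_of_lt htpos)) htpos
  -- the perturbed point
  set x₁ : EuclideanSpace ℝ (Fin n) := x₀ + t • d with hx₁
  have hx₁i : ∀ i, x₁ i = x₀ i + t * d i := by
    intro i; simp [hx₁]
  have hx₁j : x₁ j = x₀ j + t * (l j)⁻¹ := by rw [hx₁i, hdj]
  have hx₁k : x₁ k = x₀ k - t * (l k)⁻¹ := by rw [hx₁i, hdk]; ring
  have hx₁o : ∀ i, i ≠ j → i ≠ k → x₁ i = x₀ i := by
    intro i h1 h2; rw [hx₁i, hd0 i h1 h2]; ring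
  -- x₁ ∈ P
  have hx₁P : x₁ ∈ P := by
    rw [hP]; rw [hP] at hx₀P
    simp only [Set.mem_setOf_eq] at hx₀P ⊢
    have key : ∑ i, (l i * x₁ i - l i * x₀ i) = 0 := by
      rw [show (0:ℝ) = (l j * x₁ j - l j * x₀ j) + (l k * x₁ k - l k * x₀ k) by
        rw [hx₁j, hx₁k]
        field_simp
        ring]
      apply Finset.sum_eq_add_of_mem j k (Finset.mem_univ _) (Finset.mem_univ _) hjk
      intro i _ hi
      rw [hx₁o i hi.1 hi.2]; ring
    rw [Finset.sum_sub_distrib] at key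
    linarith [hx₀P, key]
  -- norm bound
  have hnorm : ‖x₁ - x₀‖ < ε := by
    rw [hx₁, add_sub_cancel_left, norm_smul, Real.norm_eq_abs,
      abs_of_pos htpos]
    exact ht1
  -- f x₁ > f x₀
  have hfdiff : f x₁ - f x₀ = g t - g 0 := by
    rw [hf x₁, hf x₀, ← Finset.sum_sub_distrib]
    have : ∑ i, (c i * φ (x₁ i) - c i * φ (x₀ i))
        = (c j * φ (x₁ j) - c j * φ (x₀ j)) + (c k * φ (x₁ k) - c k * φ (x₀ k)) := by
      apply Finset.sum_eq_add_of_mem j k (Finset.mem_univ _) (Finset.mem_univ _) hjk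
      intro i _ hi
      rw [hx₁o i hi.1 hi.2]; ring
    rw [this, hx₁j, hx₁k]
    simp only [hg]
    ring_nf
  have := hloc x₁ hx₁P hnorm
  linarith
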